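/- The Akbulut–Kurby presentation AK(2) presents the trivial group: the normal closure of {x² y⁻³, x y x (y x y)⁻¹} in the free group F(x,y) is all of F(x,y). -/

import Mathlib

abbrev F₂ : Type := FreeGroup (Fin 2)

noncomputable def x : F₂ := FreeGroup.of 0
noncomputable def y : F₂ := FreeGroup.of 1

lemma ak2_triv {G : Type*} [Group G] (a b : G)
    (h1 : a ^ 2 = b ^ 3) (h2 : a * b * a = b * a * b) : a = 1 ∧ b = 1 := by
  have e1 : a * b * a * b⁻¹ * a⁻¹ = b := by
    rw [h2]; group
  have e2 : a ^ 2 * b⁻¹ = b⁻¹ * a ^ 2 := by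
    rw [h1]; group
  have hconj : (a * b) * a * (a * b)⁻¹ = b := by
    calc (a * b) * a * (a * b)⁻¹ = a * b * a * b⁻¹ * a⁻¹ := by group
      _ = b := e1
  have e3 : a * b * (a * a ^ 2) * (a * b)⁻¹ = b ^ 3 := by
    calc a * b * (a * a ^ 2) * (a * b)⁻¹
        = ((a * b) * a * (a * b)⁻¹) ^ 3 := by rw [conj_pow]; group
      _ = b ^ 3 := by rw [hconj]
  have e4 : b * a ^ 2 = a ^ 2 := by
    calc b * a ^ 2 = (a * b * a * b⁻¹ * a⁻¹) * a ^ 2 := by rw [e1]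
      _ = a * b * a * (b⁻¹ * a ^ 2) * a⁻¹ := by group
      _ = a * b * a * (a ^ 2 * b⁻¹) * a⁻¹ := by rw [← e2]
      _ = a * b * (a * a ^ 2) * (a * b)⁻¹ := by group
      _ = b ^ 3 := e3
      _ = a ^ 2 := h1.symm
  have hb : b = 1 := by
    have : b * a ^ 2 = 1 * a ^ 2 := by rw [e4, one_mul]
    exact mul_right_cancel this
  have ha : a = 1 := by
    have h2' := h2
    rw [hb, mul_one, one_mul, mul_one] at h2'
    have : a * a = a * 1 := by rw [h2', mul_one]
    exact mul_left_cancel this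
  exact ⟨ha, hb⟩

/-- AK(2) presents the trivial group:
⟨⟨{x² y⁻³, x y x (y x y)⁻¹}⟩⟩ = F(x,y). -/
theorem stmt_19 :
    Subgroup.normalClosure
        ({x ^ 2 * (y⁻¹) ^ 3, x * y * x * (y * x * y)⁻¹} : Set F₂) = ⊤ := by
  set N := Subgroup.normalClosure
      ({x ^ 2 * (y⁻¹) ^ 3, x * y * x * (y * x * y)⁻¹} : Set F₂) with hNdef
  haveI : N.Normal := Subgroup.normalClosure_normal
  let φ := QuotientGroup.mk' N
  have hr : φ (x ^ 2 * (y⁻¹) ^ 3) = 1 :=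
    (QuotientGroup.eq_one_iff _).mpr
      (Subgroup.subset_normalClosure (Set.mem_insert _ _))
  have hs : φ (x * y * x * (y * x * y)⁻¹) = 1 :=
    (QuotientGroup.eq_one_iff _).mpr
      (Subgroup.subset_normalClosure (Set.mem_insert_of_mem _ rfl))
  have h1 : (φ x) ^ 2 = (φ y) ^ 3 := by
    have : (φ x) ^ 2 * ((φ y)⁻¹) ^ 3 = 1 := by
      simpa [map_mul, map_pow, map_inv] using hr
    rw [inv_pow] at this
    exact (mul_inv_eq_one.mp this)
  have h2 : φ x * φ y * φ x = φ y * φ x * φ y := by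
    have : φ x * φ y * φ x * (φ y * φ x * φ y)⁻¹ = 1 := by
      simpa [map_mul, map_inv] using hs
    exact (mul_inv_eq_one.mp this)
  obtain ⟨hxa, hyb⟩ := ak2_triv (φ x) (φ y) h1 h2
  have hxN : x ∈ N := (QuotientGroup.eq_one_iff x).mp hxa
  have hyN : y ∈ N := (QuotientGroup.eq_one_iff y).mp hyb
  rw [Subgroup.eq_top_iff']
  intro g
  induction g using FreeGroup.induction_on with
  | C1 => exact N.one_mem
  | of i =>
      match i with
      | 0 => exact hxN
      | 1 => exact hyN
  | inv_of i h => exact N.inv_mem h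
  | mul _ _ h1 h2 => exact N.mul_mem h1 h2
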